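/- Let I ⊆ ℝ be an open interval, a, b ∈ ℝ with a ≠ 0, and let f : I → ℝ be a continuously differentiable function with f'(x) ≠ 0 for all x ∈ I satisfying f'(x)² = a·f(x) + b on I. Then there exists a constant c ∈ ℝ such that f(x) = (a·x + c)²/(4a) − b/a for all x ∈ I. -/

import Mathlib

private lemma const_of_deriv0 {s : Set ℝ} (hs : Convex ℝ s) (hso : IsOpen s)
    {g : ℝ → ℝ} (h : ∀ x ∈ s, HasDerivAt g 0 x) {x y : ℝ} (hx : x ∈ s) (hy : y ∈ s) :
    g x = g y := by
  refine hs.is_const_of_fderivWithin_eq_zero (fun z hz => ((h z hz).differentiableAt).differentiableWithinAt) (fun z hz => ?_) hx hy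
  rw [fderivWithin_of_isOpen hso hz, (h z hz).hasFDerivAt.fderiv]
  ext; simp

theorem stmt_6 (α β a b : ℝ) (ha : a ≠ 0) (f : ℝ → ℝ)
    (hf : ContDiffOn ℝ 1 f (Set.Ioo α β))
    (hne : ∀ x ∈ Set.Ioo α β, deriv f x ≠ 0)
    (hode : ∀ x ∈ Set.Ioo α β, (deriv f x) ^ 2 = a * f x + b) :
    ∃ c : ℝ, ∀ x ∈ Set.Ioo α β, f x = (a * x + c) ^ 2 / (4 * a) - b / a := by
  set I := Set.Ioo α β with hIdef
  rcases Set.eq_empty_or_nonempty I with hIe | ⟨x₀, hx₀⟩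
  · exact ⟨0, fun x hx => absurd (hIe ▸ hx) (Set.notMem_empty x)⟩
  have hIo : IsOpen I := isOpen_Ioo
  have hIc : Convex ℝ I := convex_Ioo α β
  have hdiff : ∀ x ∈ I, DifferentiableAt ℝ f x := fun x hx =>
    (hf.differentiableOn one_ne_zero).differentiableAt (hIo.mem_nhds hx)
  have hcd : ContinuousOn (deriv f) I := hf.continuousOn_deriv_of_isOpen hIo le_rfl
  -- positivity of a f + b
  have hpos : ∀ x ∈ I, 0 < a * f x + b := fun x hx => by
    have := hode x hx
    nlinarith [sq_nonneg (deriv f x), hne x hx, sq_abs (deriv f x),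
      abs_pos.mpr (hne x hx)]
  -- constant sign of deriv f
  have hsign : ∀ x ∈ I, 0 < deriv f x * deriv f x₀ := by
    intro x hx
    by_contra h
    have hlt : deriv f x * deriv f x₀ < 0 :=
      lt_of_le_of_ne (not_lt.mp h) (mul_ne_zero (hne x hx) (hne x₀ hx₀))
    have hsub : Set.uIcc x x₀ ⊆ I := hIc.ordConnected.uIcc_subset hx hx₀
    have : (0:ℝ) ∈ Set.uIcc (deriv f x) (deriv f x₀) := by
      rcases lt_or_ge (deriv f x) 0 with h1 | h1
      · have h2 : 0 < deriv f x₀ := by nlinarith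
        exact Set.mem_uIcc.mpr (Or.inl ⟨h1.le, h2.le⟩)
      · have h2 : deriv f x₀ < 0 := by nlinarith
        exact Set.mem_uIcc.mpr (Or.inr ⟨h2.le, h1⟩)
    obtain ⟨z, hz, hz0⟩ := intermediate_value_uIcc (hcd.mono hsub) this
    exact hne z (hsub hz) hz0
  -- deriv f = ε * sqrt (a f + b)
  obtain ⟨ε, hε, hds⟩ : ∃ ε : ℝ, ε^2 = 1 ∧ ∀ x ∈ I, deriv f x = ε * Real.sqrt (a * f x + b) := by
    have key : ∀ x ∈ I, Real.sqrt (a * f x + b) = |deriv f x| := fun x hx => by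
      rw [← hode x hx, Real.sqrt_sq_eq_abs]
    rcases lt_or_ge 0 (deriv f x₀) with h0 | h0
    · refine ⟨1, by norm_num, fun x hx => ?_⟩
      have := hsign x hx
      rw [key x hx, abs_of_pos (by nlinarith), one_mul]
    · have h0' : deriv f x₀ < 0 := lt_of_le_of_ne h0 (hne x₀ hx₀)
      refine ⟨-1, by norm_num, fun x hx => ?_⟩
      have := hsign x hx
      rw [key x hx, abs_of_neg (by nlinarith)]; ring
  have hεne : ε ≠ 0 := fun h => by simp [h] at hε
  -- deriv of deriv f is a/2
  have hdd : ∀ x ∈ I, HasDerivAt (deriv f) (a / 2) x := by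
    intro x hx
    have hs0 : Real.sqrt (a * f x + b) ≠ 0 := (Real.sqrt_pos.mpr (hpos x hx)).ne'
    have h1 : HasDerivAt (fun y => a * f y + b) (a * deriv f x) x :=
      ((hdiff x hx).hasDerivAt.const_mul a).add_const b
    have h2 : HasDerivAt (fun y => ε * Real.sqrt (a * f y + b))
        (ε * (1 / (2 * Real.sqrt (a * f x + b)) * (a * deriv f x))) x :=
      (((Real.hasDerivAt_sqrt (hpos x hx).ne').comp x h1)).const_mul ε
    have heq : deriv f =ᶠ[nhds x] fun y => ε * Real.sqrt (a * f y + b) := by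
      filter_upwards [hIo.mem_nhds hx] with y hy using hds y hy
    have h3 : HasDerivAt (deriv f)
        (ε * (1 / (2 * Real.sqrt (a * f x + b)) * (a * deriv f x))) x :=
      h2.congr_of_eventuallyEq heq
    convert h3 using 1
    have hx' : deriv f x = ε * Real.sqrt (a * f x + b) := hds x hx
    have hr : ε * (1 / (2 * Real.sqrt (a * f x + b)) * (a * (ε * Real.sqrt (a * f x + b))))
        = ε ^ 2 * a / 2 := by field_simp
    rw [hx', hr, hε, one_mul]
  -- deriv f x = (a/2) x + k
  set k := deriv f x₀ - a / 2 * x₀ with hk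
  have hd1 : ∀ x ∈ I, deriv f x = a / 2 * x + k := by
    intro x hx
    have hc : ∀ y ∈ I, HasDerivAt (fun z => deriv f z - a / 2 * z) 0 y := by
      intro y hy
      have := (hdd y hy).sub ((hasDerivAt_id y).const_mul (a / 2))
      exact this.congr_deriv (by ring)
    have := const_of_deriv0 hIc hIo hc hx hx₀
    linarith [this]
  refine ⟨2 * k, fun x hx => ?_⟩
  have hc : ∀ y ∈ I, HasDerivAt
      (fun z => f z - ((a * z + 2 * k) ^ 2 / (4 * a) - b / a)) 0 y := by
    intro y hy
    have h1 : HasDerivAt (fun z => (a * z + 2 * k) ^ 2 / (4 * a) - b / a)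
        (2 * (a * y + 2 * k) * a / (4 * a)) y := by
      have : HasDerivAt (fun z => a * z + 2 * k) a y := by
        simpa using ((hasDerivAt_id y).const_mul a).add_const (2 * k)
      simpa [div_eq_mul_inv, mul_comm, mul_assoc, mul_left_comm] using
        ((this.pow 2).div_const (4 * a)).sub_const (b / a)
    have h2 := ((hdiff y hy).hasDerivAt).sub h1
    refine h2.congr_deriv ?_
    rw [hd1 y hy]
    field_simp
    ring
  have hcon := const_of_deriv0 hIc hIo hc hx hx₀
  have hval : f x₀ = (a * x₀ + 2 * k) ^ 2 / (4 * a) - b / a := by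
    have h1 : a * x₀ + 2 * k = 2 * deriv f x₀ := by rw [hk]; ring
    have h2 : (2 * deriv f x₀) ^ 2 / (4 * a) = (a * f x₀ + b) / a := by
      rw [← hode x₀ hx₀]; field_simp; ring
    rw [h1, h2]
    field_simp
    ring
  linarith [hcon, hval]
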